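/- For functions u, z in H^2(0,1) vanishing with their first derivatives at 0 and 1, the map f(u) = -∂_x (G * (u^2 + (1/2)u_x^2)) satisfies the Lipschitz estimate ‖f(u) - f(z)‖_{H^2} ≤ (3/2)(‖u‖_{H^2} + ‖z‖_{H^2}) ‖u - z‖_{H^2}. -/

import Mathlib

open MeasureTheory

noncomputable def Gper : ℝ → ℝ := fun x => Real.cosh (Int.fract x - 1/2) / (2 * Real.sinh (1/2))

noncomputable def convG (h : ℝ → ℝ) : ℝ → ℝ := fun x => ∫ y in (0:ℝ)..1, Gper (x - y) * h y

noncomputable def H1norm (f : ℝ → ℝ) : ℝ :=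
  Real.sqrt ((∫ x in (0:ℝ)..1, (f x)^2) + ∫ x in (0:ℝ)..1, (deriv f x)^2)

noncomputable def H2norm (f : ℝ → ℝ) : ℝ :=
  Real.sqrt ((∫ x in (0:ℝ)..1, (f x)^2) + (∫ x in (0:ℝ)..1, (deriv f x)^2)
    + ∫ x in (0:ℝ)..1, (deriv (deriv f) x)^2)

noncomputable def fCH (u : ℝ → ℝ) : ℝ → ℝ :=
  fun x => -deriv (convG fun y => (u y)^2 + (1/2) * (deriv u y)^2) x

lemma hasDerivAt_primitive {g : ℝ → ℝ} (hg : Continuous g) (x : ℝ) :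
    HasDerivAt (fun t => ∫ y in (0:ℝ)..t, g y) (g x) x :=
  intervalIntegral.integral_hasDerivAt_right (hg.intervalIntegrable _ _)
    hg.aestronglyMeasurable.stronglyMeasurableAtFilter hg.continuousAt

noncomputable def Pc (h : ℝ → ℝ) : ℝ → ℝ := fun x =>
  (∫ y in (0:ℝ)..x, Real.cosh (y + 1/2) * h y) - (∫ y in (0:ℝ)..x, Real.cosh (y - 1/2) * h y)
    + ∫ y in (0:ℝ)..(1:ℝ), Real.cosh (y - 1/2) * h y

noncomputable def Ps (h : ℝ → ℝ) : ℝ → ℝ := fun x =>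
  (∫ y in (0:ℝ)..x, Real.sinh (y + 1/2) * h y) - (∫ y in (0:ℝ)..x, Real.sinh (y - 1/2) * h y)
    + ∫ y in (0:ℝ)..(1:ℝ), Real.sinh (y - 1/2) * h y

noncomputable def Kf (h : ℝ → ℝ) : ℝ → ℝ := fun x =>
  Real.cosh x * Pc h x - Real.sinh x * Ps h x

noncomputable def Lf (h : ℝ → ℝ) : ℝ → ℝ := fun x =>
  Real.sinh x * Pc h x - Real.cosh x * Ps h x

variable {h : ℝ → ℝ}

lemma Pc_hasDeriv (hh : Continuous h) (x : ℝ) :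
    HasDerivAt (Pc h) ((Real.cosh (x + 1/2) - Real.cosh (x - 1/2)) * h x) x := by
  have h1 := hasDerivAt_primitive (g := fun y => Real.cosh (y + 1/2) * h y)
    (by continuity) x
  have h2 := hasDerivAt_primitive (g := fun y => Real.cosh (y - 1/2) * h y)
    (by continuity) x
  have := (h1.sub h2).add_const (∫ y in (0:ℝ)..(1:ℝ), Real.cosh (y - 1/2) * h y)
  refine this.congr_deriv ?_
  ring

lemma Ps_hasDeriv (hh : Continuous h) (x : ℝ) :
    HasDerivAt (Ps h) ((Real.sinh (x + 1/2) - Real.sinh (x - 1/2)) * h x) x := by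
  have h1 := hasDerivAt_primitive (g := fun y => Real.sinh (y + 1/2) * h y)
    (by continuity) x
  have h2 := hasDerivAt_primitive (g := fun y => Real.sinh (y - 1/2) * h y)
    (by continuity) x
  have := (h1.sub h2).add_const (∫ y in (0:ℝ)..(1:ℝ), Real.sinh (y - 1/2) * h y)
  refine this.congr_deriv ?_
  ring

lemma Pc_continuous (hh : Continuous h) : Continuous (Pc h) := by
  have : Differentiable ℝ (Pc h) := fun x => (Pc_hasDeriv hh x).differentiableAt
  exact this.continuous

lemma Ps_continuous (hh : Continuous h) : Continuous (Ps h) := by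
  have : Differentiable ℝ (Ps h) := fun x => (Ps_hasDeriv hh x).differentiableAt
  exact this.continuous

lemma Kf_hasDeriv (hh : Continuous h) (x : ℝ) : HasDerivAt (Kf h) (Lf h x) x := by
  have := ((Real.hasDerivAt_cosh x).mul (Pc_hasDeriv hh x)).sub
    ((Real.hasDerivAt_sinh x).mul (Ps_hasDeriv hh x))
  refine (this.congr_deriv ?_); symm
  have e1 : Real.cosh x * Real.cosh (x+1/2) - Real.sinh x * Real.sinh (x+1/2)
      = Real.cosh (1/2) := by rw [← Real.cosh_sub]; norm_num
  have e2 : Real.cosh x * Real.cosh (x-1/2) - Real.sinh x * Real.sinh (x-1/2)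
      = Real.cosh (1/2) := by
    rw [← Real.cosh_sub]; norm_num [Real.cosh_neg]
  simp only [Lf]
  linear_combination (h x) * e2 - (h x) * e1

lemma Lf_hasDeriv (hh : Continuous h) (x : ℝ) :
    HasDerivAt (Lf h) (Kf h x - 2 * Real.sinh (1/2) * h x) x := by
  have := ((Real.hasDerivAt_sinh x).mul (Pc_hasDeriv hh x)).sub
    ((Real.hasDerivAt_cosh x).mul (Ps_hasDeriv hh x))
  refine (this.congr_deriv ?_); symm
  have e1 : Real.sinh x * Real.cosh (x+1/2) - Real.cosh x * Real.sinh (x+1/2)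
      = Real.sinh (-(1/2)) := by rw [← Real.sinh_sub]; norm_num
  have e2 : Real.sinh x * Real.cosh (x-1/2) - Real.cosh x * Real.sinh (x-1/2)
      = Real.sinh (1/2) := by rw [← Real.sinh_sub]; norm_num
  simp only [Kf]
  have e3 : Real.sinh (-(1/2)) = -Real.sinh (1/2) := Real.sinh_neg _
  linear_combination (h x) * e2 - (h x) * e1 - (h x) * e3

lemma Gper_eq_right {t : ℝ} (ht0 : 0 ≤ t) (ht1 : t ≤ 1) :
    Gper t = Real.cosh (t - 1/2) / (2 * Real.sinh (1/2)) := by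
  rcases eq_or_lt_of_le ht1 with rfl | ht1
  · show Real.cosh (Int.fract 1 - 1/2) / _ = _
    norm_num [Real.cosh_neg]
  · show Real.cosh (Int.fract t - 1/2) / _ = _
    rw [Int.fract_eq_self.2 ⟨ht0, ht1⟩]

lemma Gper_eq_left {t : ℝ} (ht0 : -1 ≤ t) (ht1 : t ≤ 0) :
    Gper t = Real.cosh (t + 1/2) / (2 * Real.sinh (1/2)) := by
  rcases eq_or_lt_of_le ht1 with rfl | ht1
  · show Real.cosh (Int.fract 0 - 1/2) / _ = _
    norm_num [Real.cosh_neg]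
  · show Real.cosh (Int.fract t - 1/2) / _ = _
    have hf : Int.fract t = t + 1 := by
      have h1 : Int.fract (t + (1:ℤ)) = Int.fract t := Int.fract_add_intCast t 1
      have h2 : Int.fract (t + (1:ℤ)) = t + 1 := by
        push_cast
        exact Int.fract_eq_self.2 ⟨by linarith, by linarith⟩
      rw [← h1, h2]
    rw [hf]
    norm_num [show t + 1 - 1/2 = t + 1/2 by ring]

lemma cosh_split (hh : Continuous h) (a b x c : ℝ) :
    ∫ y in a..b, Real.cosh (x - y - c) * h y
      = Real.cosh x * (∫ y in a..b, Real.cosh (y + c) * h y)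
        - Real.sinh x * ∫ y in a..b, Real.sinh (y + c) * h y := by
  rw [← intervalIntegral.integral_const_mul, ← intervalIntegral.integral_const_mul,
    ← intervalIntegral.integral_sub (Continuous.intervalIntegrable (by continuity) _ _) (Continuous.intervalIntegrable (by continuity) _ _)]
  apply intervalIntegral.integral_congr; intro y _
  simp only
  rw [show x - y - c = x - (y + c) by ring, Real.cosh_sub]
  ring

lemma cosh_split' (hh : Continuous h) (a b x c : ℝ) :
    ∫ y in a..b, Real.cosh (x - y + c) * h y
      = Real.cosh x * (∫ y in a..b, Real.cosh (y - c) * h y)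
        - Real.sinh x * ∫ y in a..b, Real.sinh (y - c) * h y := by
  rw [← intervalIntegral.integral_const_mul, ← intervalIntegral.integral_const_mul,
    ← intervalIntegral.integral_sub (Continuous.intervalIntegrable (by continuity) _ _)
      (Continuous.intervalIntegrable (by continuity) _ _)]
  apply intervalIntegral.integral_congr; intro y _
  simp only
  rw [show x - y + c = x - (y - c) by ring, Real.cosh_sub]
  ring

lemma sinh_half_pos : 0 < Real.sinh (1/2) := Real.sinh_pos_iff.2 (by norm_num)

lemma convG'_eq (hh : Continuous h) {x : ℝ} (hx0 : 0 ≤ x) (hx1 : x ≤ 1) :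
    (∫ y in (0:ℝ)..1, Gper (x - y) * h y) = Kf h x / (2 * Real.sinh (1/2)) := by
  have e1 : Set.EqOn (fun y => (Real.cosh (x - y - 1/2) * h y) / (2 * Real.sinh (1/2)))
      (fun y => Gper (x - y) * h y) (Set.uIcc 0 x) := by
    intro y hy
    rw [Set.uIcc_of_le hx0] at hy
    simp only
    rw [Gper_eq_right (t := x - y) (by linarith [hy.1, hy.2]) (by linarith [hy.1, hy.2])]
    ring
  have e2 : Set.EqOn (fun y => (Real.cosh (x - y + 1/2) * h y) / (2 * Real.sinh (1/2)))
      (fun y => Gper (x - y) * h y) (Set.uIcc x 1) := by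
    intro y hy
    rw [Set.uIcc_of_le hx1] at hy
    simp only
    rw [Gper_eq_left (t := x - y) (by linarith [hy.1, hy.2]) (by linarith [hy.1, hy.2])]
    ring
  have c1 : Continuous fun y => (Real.cosh (x - y - 1/2) * h y) / (2 * Real.sinh (1/2)) :=
    ((Real.continuous_cosh.comp (by fun_prop)).mul hh).div_const _
  have c2 : Continuous fun y => (Real.cosh (x - y + 1/2) * h y) / (2 * Real.sinh (1/2)) :=
    ((Real.continuous_cosh.comp (by fun_prop)).mul hh).div_const _
  have I1 : IntervalIntegrable (fun y => Gper (x - y) * h y) volume 0 x := by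
    rw [intervalIntegrable_iff_integrableOn_Ioc_of_le hx0]
    exact ((intervalIntegrable_iff_integrableOn_Ioc_of_le hx0).mp (c1.intervalIntegrable 0 x)).congr_fun
      (e1.mono (by rw [Set.uIcc_of_le hx0]; exact Set.Ioc_subset_Icc_self)) measurableSet_Ioc
  have I2 : IntervalIntegrable (fun y => Gper (x - y) * h y) volume x 1 := by
    rw [intervalIntegrable_iff_integrableOn_Ioc_of_le hx1]
    exact ((intervalIntegrable_iff_integrableOn_Ioc_of_le hx1).mp (c2.intervalIntegrable x 1)).congr_fun
      (e2.mono (by rw [Set.uIcc_of_le hx1]; exact Set.Ioc_subset_Icc_self)) measurableSet_Ioc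
  have hsplit := intervalIntegral.integral_add_adjacent_intervals I1 I2
  rw [← hsplit]
  rw [← intervalIntegral.integral_congr e1, ← intervalIntegral.integral_congr e2]
  rw [intervalIntegral.integral_div, intervalIntegral.integral_div,
    cosh_split hh, cosh_split' hh]
  have hsub1 : (∫ y in x..(1:ℝ), Real.cosh (y - 1/2) * h y)
      = (∫ y in (0:ℝ)..1, Real.cosh (y - 1/2) * h y) - ∫ y in (0:ℝ)..x, Real.cosh (y - 1/2) * h y := by
    rw [eq_sub_iff_add_eq, add_comm]
    exact intervalIntegral.integral_add_adjacent_intervals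
      (Continuous.intervalIntegrable (by fun_prop) _ _)
      (Continuous.intervalIntegrable (by fun_prop) _ _)
  have hsub2 : (∫ y in x..(1:ℝ), Real.sinh (y - 1/2) * h y)
      = (∫ y in (0:ℝ)..1, Real.sinh (y - 1/2) * h y) - ∫ y in (0:ℝ)..x, Real.sinh (y - 1/2) * h y := by
    rw [eq_sub_iff_add_eq, add_comm]
    exact intervalIntegral.integral_add_adjacent_intervals
      (Continuous.intervalIntegrable (by fun_prop) _ _)
      (Continuous.intervalIntegrable (by fun_prop) _ _)
  rw [hsub1, hsub2]
  simp only [Kf, Pc, Ps]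
  ring

lemma sinh_split (hh : Continuous h) (a b x c : ℝ) :
    ∫ y in a..b, Real.sinh (x - y - c) * h y
      = Real.sinh x * (∫ y in a..b, Real.cosh (y + c) * h y)
        - Real.cosh x * ∫ y in a..b, Real.sinh (y + c) * h y := by
  rw [← intervalIntegral.integral_const_mul, ← intervalIntegral.integral_const_mul,
    ← intervalIntegral.integral_sub (Continuous.intervalIntegrable (by continuity) _ _)
      (Continuous.intervalIntegrable (by continuity) _ _)]
  apply intervalIntegral.integral_congr; intro y _
  simp only
  rw [show x - y - c = x - (y + c) by ring, Real.sinh_sub]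
  ring

lemma Kf_periodic (hh : Continuous h) : Kf h 1 = Kf h 0 := by
  have e1 : Kf h 1 = ∫ y in (0:ℝ)..1, Real.cosh (1 - y - 1/2) * h y := by
    simp only [Kf, Pc, Ps]
    rw [cosh_split hh 0 1 1 (1/2)]
    simp [intervalIntegral.integral_same]
  have e2 : Kf h 0 = ∫ y in (0:ℝ)..1, Real.cosh (y - 1/2) * h y := by
    simp only [Kf, Pc, Ps]
    simp [intervalIntegral.integral_same]
  rw [e1, e2]
  apply intervalIntegral.integral_congr; intro y _
  simp only
  rw [show (1:ℝ) - y - 1/2 = -(y - 1/2) by ring, Real.cosh_neg]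

lemma Lf_periodic (hh : Continuous h) : Lf h 1 = Lf h 0 := by
  have e1 : Lf h 1 = ∫ y in (0:ℝ)..1, Real.sinh (1 - y - 1/2) * h y := by
    simp only [Lf, Pc, Ps]
    rw [sinh_split hh 0 1 1 (1/2)]
    simp [intervalIntegral.integral_same]
  have e2 : Lf h 0 = -∫ y in (0:ℝ)..1, Real.sinh (y - 1/2) * h y := by
    simp only [Lf, Pc, Ps]
    simp [intervalIntegral.integral_same]
  rw [e1, e2, ← intervalIntegral.integral_neg]
  apply intervalIntegral.integral_congr; intro y _
  simp only
  rw [show (1:ℝ) - y - 1/2 = -(y - 1/2) by ring, Real.sinh_neg]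
  ring

lemma Pc_sub {h1 h2 : ℝ → ℝ} (hh1 : Continuous h1) (hh2 : Continuous h2) (x : ℝ) :
    Pc (fun y => h1 y - h2 y) x = Pc h1 x - Pc h2 x := by
  simp only [Pc]
  rw [show (fun y => Real.cosh (y + 1/2) * (h1 y - h2 y))
      = fun y => Real.cosh (y + 1/2) * h1 y - Real.cosh (y + 1/2) * h2 y by funext y; ring,
    show (fun y => Real.cosh (y - 1/2) * (h1 y - h2 y))
      = fun y => Real.cosh (y - 1/2) * h1 y - Real.cosh (y - 1/2) * h2 y by funext y; ring]
  rw [intervalIntegral.integral_sub (Continuous.intervalIntegrable (by continuity) _ _)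
      (Continuous.intervalIntegrable (by continuity) _ _),
    intervalIntegral.integral_sub (Continuous.intervalIntegrable (by continuity) _ _)
      (Continuous.intervalIntegrable (by continuity) _ _),
    intervalIntegral.integral_sub (Continuous.intervalIntegrable (by continuity) _ _)
      (Continuous.intervalIntegrable (by continuity) _ _)]
  ring

lemma Ps_sub {h1 h2 : ℝ → ℝ} (hh1 : Continuous h1) (hh2 : Continuous h2) (x : ℝ) :
    Ps (fun y => h1 y - h2 y) x = Ps h1 x - Ps h2 x := by
  simp only [Ps]
  rw [show (fun y => Real.sinh (y + 1/2) * (h1 y - h2 y))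
      = fun y => Real.sinh (y + 1/2) * h1 y - Real.sinh (y + 1/2) * h2 y by funext y; ring,
    show (fun y => Real.sinh (y - 1/2) * (h1 y - h2 y))
      = fun y => Real.sinh (y - 1/2) * h1 y - Real.sinh (y - 1/2) * h2 y by funext y; ring]
  rw [intervalIntegral.integral_sub (Continuous.intervalIntegrable (by continuity) _ _)
      (Continuous.intervalIntegrable (by continuity) _ _),
    intervalIntegral.integral_sub (Continuous.intervalIntegrable (by continuity) _ _)
      (Continuous.intervalIntegrable (by continuity) _ _),
    intervalIntegral.integral_sub (Continuous.intervalIntegrable (by continuity) _ _)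
      (Continuous.intervalIntegrable (by continuity) _ _)]
  ring

lemma Lf_sub {h1 h2 : ℝ → ℝ} (hh1 : Continuous h1) (hh2 : Continuous h2) (x : ℝ) :
    Lf (fun y => h1 y - h2 y) x = Lf h1 x - Lf h2 x := by
  simp only [Lf, Pc_sub hh1 hh2, Ps_sub hh1 hh2]; ring

lemma integral_congr_Ioo {f g : ℝ → ℝ} (hfg : ∀ x ∈ Set.Ioo (0:ℝ) 1, f x = g x) :
    ∫ x in (0:ℝ)..1, f x = ∫ x in (0:ℝ)..1, g x := by
  apply intervalIntegral.integral_congr_ae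
  have h1 : ∀ᵐ (x : ℝ), x ∉ ({1} : Set ℝ) :=
    MeasureTheory.compl_mem_ae_iff.2 (by simp)
  filter_upwards [h1] with x hx hmem
  rw [Set.uIoc_of_le (by norm_num : (0:ℝ) ≤ 1)] at hmem
  exact hfg x ⟨hmem.1, lt_of_le_of_ne hmem.2 (by simpa using hx)⟩

lemma expand_sq {f g : ℝ → ℝ} (hf : Continuous f) (hg : Continuous g) :
    ∫ x in (0:ℝ)..1, (f x - g x)^2
      = (∫ x in (0:ℝ)..1, (f x)^2) - 2*(∫ x in (0:ℝ)..1, f x * g x)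
        + ∫ x in (0:ℝ)..1, (g x)^2 := by
  rw [← intervalIntegral.integral_const_mul,
    ← intervalIntegral.integral_sub (Continuous.intervalIntegrable (by continuity) _ _)
      (Continuous.intervalIntegrable (by continuity) _ _),
    ← intervalIntegral.integral_add (Continuous.intervalIntegrable (by continuity) _ _)
      (Continuous.intervalIntegrable (by continuity) _ _)]
  apply intervalIntegral.integral_congr; intro y _
  simp only; ring

lemma prod_bound {S X Y : ℝ} (hX : 0 ≤ X) (hY : 0 ≤ Y)
    (hS : ∀ t > (0:ℝ), 2*S ≤ t*X^2 + Y^2/t) : S ≤ X*Y := by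
  rcases le_or_gt S 0 with h | h
  · exact le_trans h (by positivity)
  · rcases eq_or_lt_of_le hX with rfl | hX'
    · exfalso
      have ht := hS ((Y^2+1)/(2*S)) (by positivity)
      rw [div_div_eq_mul_div] at ht
      have : Y^2*(2*S)/(Y^2+1) < 2*S := by
        rw [div_lt_iff₀ (by positivity)]
        nlinarith
      nlinarith
    · rcases eq_or_lt_of_le hY with rfl | hY'
      · exfalso
        have ht := hS (S/X^2) (by positivity)
        have he : S/X^2 * X^2 + (0:ℝ)^2/(S/X^2) = S := by field_simp; ring
        rw [he] at ht
        linarith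
      · have ht := hS (Y/X) (by positivity)
        have he : (Y/X)*X^2 + Y^2/(Y/X) = 2*(X*Y) := by field_simp; ring
        linarith [he ▸ ht]

lemma sup_bound {f f' : ℝ → ℝ} (hd : ∀ t, HasDerivAt f (f' t) t) (hf'c : Continuous f')
    (h0 : f 0 = 0) (h1 : f 1 = 0) {x : ℝ} (hx0 : 0 ≤ x) (hx1 : x ≤ 1) :
    (f x)^2 ≤ ((∫ t in (0:ℝ)..1, (f t)^2) + ∫ t in (0:ℝ)..1, (f' t)^2)/2 := by
  have hfc : Continuous f := by
    have : Differentiable ℝ f := fun t => (hd t).differentiableAt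
    exact this.continuous
  have hder : ∀ t, HasDerivAt (fun s => (f s)^2) (2 * f t * f' t) t := by
    intro t
    have := (hd t).fun_pow 2
    simpa using this
  have e1 : (∫ t in (0:ℝ)..x, 2 * f t * f' t) = (f x)^2 := by
    rw [intervalIntegral.integral_eq_sub_of_hasDerivAt (fun t _ => hder t)
      (Continuous.intervalIntegrable (by continuity) _ _), h0]
    ring
  have e2 : (∫ t in x..(1:ℝ), 2 * f t * f' t) = -(f x)^2 := by
    rw [intervalIntegral.integral_eq_sub_of_hasDerivAt (fun t _ => hder t)
      (Continuous.intervalIntegrable (by continuity) _ _), h1]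
    ring
  have b1 : (∫ t in (0:ℝ)..x, 2 * f t * f' t) ≤ ∫ t in (0:ℝ)..x, ((f t)^2 + (f' t)^2) :=
    intervalIntegral.integral_mono_on hx0 (Continuous.intervalIntegrable (by continuity) _ _)
      (Continuous.intervalIntegrable (by continuity) _ _)
      (fun t _ => by nlinarith [sq_nonneg (f t - f' t)])
  have b2 : -(∫ t in x..(1:ℝ), 2 * f t * f' t) ≤ ∫ t in x..(1:ℝ), ((f t)^2 + (f' t)^2) := by
    rw [← intervalIntegral.integral_neg]
    exact intervalIntegral.integral_mono_on hx1 (Continuous.intervalIntegrable (by continuity) _ _)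
      (Continuous.intervalIntegrable (by continuity) _ _)
      (fun t _ => by nlinarith [sq_nonneg (f t + f' t)])
  have hsum : (∫ t in (0:ℝ)..x, ((f t)^2 + (f' t)^2))
      + (∫ t in x..(1:ℝ), ((f t)^2 + (f' t)^2)) = ∫ t in (0:ℝ)..1, ((f t)^2 + (f' t)^2) :=
    intervalIntegral.integral_add_adjacent_intervals
      (Continuous.intervalIntegrable (by continuity) _ _)
      (Continuous.intervalIntegrable (by continuity) _ _)
  have hsplit : (∫ t in (0:ℝ)..1, ((f t)^2 + (f' t)^2))
      = (∫ t in (0:ℝ)..1, (f t)^2) + ∫ t in (0:ℝ)..1, (f' t)^2 :=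
    intervalIntegral.integral_add (Continuous.intervalIntegrable (by continuity) _ _)
      (Continuous.intervalIntegrable (by continuity) _ _)
  linarith

lemma prod_bound' {S X Y : ℝ} (hX : 0 ≤ X) (hY : 0 ≤ Y)
    (hS : ∀ t > (0:ℝ), 2*S*t ≤ t^2*X^2 + Y^2) : S ≤ X*Y := by
  rcases le_or_gt S 0 with h | h
  · exact le_trans h (by positivity)
  · rcases eq_or_lt_of_le hX with rfl | hX'
    · exfalso
      have ht := hS ((Y^2+1)/(2*S)) (by positivity)
      have he : 2*S*((Y^2+1)/(2*S)) = Y^2+1 := by field_simp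
      rw [he] at ht
      nlinarith
    · rcases eq_or_lt_of_le hY with rfl | hY'
      · exfalso
        have ht := hS (S/X^2) (by positivity)
        have h2 : (S/X^2)^2 * X^2 = S^2/X^2 := by field_simp
        have he : 2*S*(S/X^2) = 2*(S^2/X^2) := by ring
        rw [h2, he] at ht
        have hp : 0 < S^2/X^2 := by positivity
        nlinarith
      · have ht := hS (Y/X) (by positivity)
        have h2 : (Y/X)^2 * X^2 = Y^2 := by field_simp
        rw [h2] at ht
        have h3 : 2*S*(Y/X) = 2*S*Y/X := by ring
        rw [h3] at ht
        have h4 : 2*S*Y/X ≤ Y^2 + Y^2 → 2*S*Y ≤ 2*Y^2*X := by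
          intro hh
          calc 2*S*Y = (2*S*Y/X)*X := by field_simp
          _ ≤ (Y^2+Y^2)*X := mul_le_mul_of_nonneg_right hh hX
          _ = 2*Y^2*X := by ring
        nlinarith [h4 ht]

noncomputable def wCH (u : ℝ → ℝ) : ℝ → ℝ := fun y => (u y)^2 + (1/2)*(deriv u y)^2

lemma deriv_bits {u : ℝ → ℝ} (hu : ContDiff ℝ 2 u) :
    Continuous u ∧ Continuous (deriv u) ∧ Continuous (deriv (deriv u)) ∧
    (∀ t, HasDerivAt u (deriv u t) t) ∧ (∀ t, HasDerivAt (deriv u) (deriv (deriv u) t) t) := by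
  have h2 : ContDiff ℝ ((1:ℕ∞)+1) u := by exact_mod_cast hu
  have hd1 : ContDiff ℝ (1:ℕ∞) (deriv u) := (contDiff_succ_iff_deriv.mp h2).2.2
  have h1 : ContDiff ℝ ((0:ℕ∞)+1) (deriv u) := by exact_mod_cast hd1
  refine ⟨hu.continuous, hd1.continuous, ((contDiff_succ_iff_deriv.mp h1).2.2).continuous,
    fun t => ((hu.differentiable (by norm_num)) t).hasDerivAt,
    fun t => ((hd1.differentiable (by norm_num)) t).hasDerivAt⟩

lemma w_hasDeriv {u : ℝ → ℝ} (hu : ContDiff ℝ 2 u) (t : ℝ) :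
    HasDerivAt (wCH u) (2*u t*deriv u t + deriv u t * deriv (deriv u) t) t := by
  obtain ⟨_, _, _, Hu, Hdu⟩ := deriv_bits hu
  have := ((Hu t).fun_pow 2).add (((Hdu t).fun_pow 2).const_mul (1/2))
  refine this.congr_deriv ?_
  push_cast
  ring

lemma wCH_continuous {u : ℝ → ℝ} (hu : ContDiff ℝ 2 u) : Continuous (wCH u) := by
  obtain ⟨cu, cdu, _, _, _⟩ := deriv_bits hu
  exact (cu.pow 2).add (continuous_const.mul (cdu.pow 2))

lemma H2norm_nonneg (f : ℝ → ℝ) : 0 ≤ H2norm f := Real.sqrt_nonneg _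

lemma expand_sq' {f g : ℝ → ℝ} (hf : Continuous f) (hg : Continuous g) :
    ∫ x in (0:ℝ)..1, (f x + g x)^2
      = (∫ x in (0:ℝ)..1, (f x)^2) + 2*(∫ x in (0:ℝ)..1, f x * g x)
        + ∫ x in (0:ℝ)..1, (g x)^2 := by
  rw [← intervalIntegral.integral_const_mul,
    ← intervalIntegral.integral_add (Continuous.intervalIntegrable (by continuity) _ _)
      (Continuous.intervalIntegrable (by continuity) _ _),
    ← intervalIntegral.integral_add (Continuous.intervalIntegrable (by continuity) _ _)
      (Continuous.intervalIntegrable (by continuity) _ _)]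
  apply intervalIntegral.integral_congr; intro y _
  simp only; ring

lemma sq_int_nonneg (f : ℝ → ℝ) : 0 ≤ ∫ x in (0:ℝ)..1, (f x)^2 :=
  intervalIntegral.integral_nonneg (by norm_num) (fun t _ => sq_nonneg _)

lemma cross_bound {f g : ℝ → ℝ} (hf : Continuous f) (hg : Continuous g) (t : ℝ) :
    2*(∫ x in (0:ℝ)..1, f x * g x)*t
      ≤ t^2*(∫ x in (0:ℝ)..1, (f x)^2) + ∫ x in (0:ℝ)..1, (g x)^2 := by
  have mono : (∫ x in (0:ℝ)..1, (2*t)*(f x * g x))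
      ≤ ∫ x in (0:ℝ)..1, (t^2*(f x)^2 + (g x)^2) :=
    intervalIntegral.integral_mono_on (by norm_num)
      (Continuous.intervalIntegrable (by continuity) _ _)
      (Continuous.intervalIntegrable (by continuity) _ _)
      (fun x _ => by nlinarith [sq_nonneg (t*f x - g x)])
  rw [intervalIntegral.integral_const_mul,
    intervalIntegral.integral_add (Continuous.intervalIntegrable (by continuity) _ _)
      (Continuous.intervalIntegrable (by continuity) _ _),
    intervalIntegral.integral_const_mul] at mono
  linarith


lemma amgm4 {a b c d A C : ℝ} (h1 : a^2 ≤ A/2) (h2 : c^2 ≤ C/2) :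
    (a*b + c*d)^2 ≤ A*b^2 + C*d^2 := by
  have k1 : (a*b + c*d)^2 ≤ 2*(a^2*b^2) + 2*(c^2*d^2) := by
    nlinarith [sq_nonneg (a*b - c*d)]
  nlinarith [mul_le_mul_of_nonneg_right h1 (sq_nonneg b),
    mul_le_mul_of_nonneg_right h2 (sq_nonneg d)]

set_option maxHeartbeats 3000000 in
/-- Lipschitz estimate for `f(u) = -∂ₓ(G*(u² + ½uₓ²))` in `H²`. -/
theorem stmt4 (u z : ℝ → ℝ) (hu : ContDiff ℝ 2 u) (hz : ContDiff ℝ 2 z)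
    (hu0 : u 0 = 0) (hu1 : u 1 = 0) (hu0' : deriv u 0 = 0) (hu1' : deriv u 1 = 0)
    (hz0 : z 0 = 0) (hz1 : z 1 = 0) (hz0' : deriv z 0 = 0) (hz1' : deriv z 1 = 0) :
    H2norm (fun x => fCH u x - fCH z x)
      ≤ (3/2) * (H2norm u + H2norm z) * H2norm (fun x => u x - z x) := by
  obtain ⟨Cu, Cdu, Cddu, Hu, Hdu⟩ := deriv_bits hu
  obtain ⟨Cz, Cdz, Cddz, Hz, Hdz⟩ := deriv_bits hz
  have Cw1 : Continuous (wCH u) := wCH_continuous hu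
  have Cw2 : Continuous (wCH z) := wCH_continuous hz
  set s2 : ℝ := 2 * Real.sinh (1/2) with hs2def
  have hs2 : 0 < s2 := by
    have := sinh_half_pos; rw [hs2def]; linarith
  set hf : ℝ → ℝ := fun y => wCH u y - wCH z y with hhdef
  set hd : ℝ → ℝ := fun y => (2*u y*deriv u y + deriv u y*deriv (deriv u) y)
      - (2*z y*deriv z y + deriv z y*deriv (deriv z) y) with hhddef
  have hh : Continuous hf := Cw1.sub Cw2
  have hhd : Continuous hd := by
    apply Continuous.sub
    · exact ((continuous_const.mul Cu).mul Cdu).add (Cdu.mul Cddu)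
    · exact ((continuous_const.mul Cz).mul Cdz).add (Cdz.mul Cddz)
  have hDh : ∀ t, HasDerivAt hf (hd t) t := fun t => (w_hasDeriv hu t).sub (w_hasDeriv hz t)
  have h0 : hf 0 = 0 := by simp [hhdef, wCH, hu0, hz0, hu0', hz0']
  have h1 : hf 1 = 0 := by simp [hhdef, wCH, hu1, hz1, hu1', hz1']
  set V : ℝ → ℝ := fun x => Kf hf x / s2 with hVdef
  set W : ℝ → ℝ := fun x => Lf hf x / s2 with hWdef
  have hVd : ∀ t, HasDerivAt V (W t) t := fun t => (Kf_hasDeriv hh t).div_const s2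
  have hWd : ∀ t, HasDerivAt W (V t - hf t) t := by
    intro t
    have H := (Lf_hasDeriv hh t).div_const s2
    have he : (Kf hf t - 2*Real.sinh (1/2)*hf t)/s2 = V t - hf t := by
      rw [hVdef]; simp only; rw [hs2def]; field_simp
    rwa [he] at H
  have CV : Continuous V := Continuous.div_const (by
    have : Differentiable ℝ (Kf hf) := fun t => (Kf_hasDeriv hh t).differentiableAt
    exact this.continuous) s2
  have CW : Continuous W := Continuous.div_const (by
    have : Differentiable ℝ (Lf hf) := fun t => (Lf_hasDeriv hh t).differentiableAt
    exact this.continuous) s2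
  -- Step 1: pointwise identification of fCH u - fCH z on (0,1)
  have hFF : ∀ x ∈ Set.Ioo (0:ℝ) 1, fCH u x - fCH z x = -W x := by
    intro x hx
    have du1 : deriv (convG (wCH u)) x = Lf (wCH u) x / s2 := by
      have heq : (convG (wCH u)) =ᶠ[nhds x] (fun t => Kf (wCH u) t / s2) := by
        filter_upwards [Ioo_mem_nhds hx.1 hx.2] with t ht
        exact convG'_eq Cw1 ht.1.le ht.2.le
      rw [heq.deriv_eq]
      exact ((Kf_hasDeriv Cw1 x).div_const s2).deriv
    have du2 : deriv (convG (wCH z)) x = Lf (wCH z) x / s2 := by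
      have heq : (convG (wCH z)) =ᶠ[nhds x] (fun t => Kf (wCH z) t / s2) := by
        filter_upwards [Ioo_mem_nhds hx.1 hx.2] with t ht
        exact convG'_eq Cw2 ht.1.le ht.2.le
      rw [heq.deriv_eq]
      exact ((Kf_hasDeriv Cw2 x).div_const s2).deriv
    show -deriv (convG (wCH u)) x - -deriv (convG (wCH z)) x = -W x
    rw [du1, du2, hWdef]
    simp only
    rw [hhdef, Lf_sub Cw1 Cw2]
    ring
  have hFF' : ∀ x ∈ Set.Ioo (0:ℝ) 1,
      deriv (fun t => fCH u t - fCH z t) x = hf x - V x := by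
    intro x hx
    have heq : (fun t => fCH u t - fCH z t) =ᶠ[nhds x] (fun t => -W t) := by
      filter_upwards [Ioo_mem_nhds hx.1 hx.2] with t ht using hFF t ht
    rw [heq.deriv_eq, ((hWd x).fun_neg).deriv]
    ring
  have hFF'' : ∀ x ∈ Set.Ioo (0:ℝ) 1,
      deriv (deriv (fun t => fCH u t - fCH z t)) x = hd x - W x := by
    intro x hx
    have heq : deriv (fun t => fCH u t - fCH z t) =ᶠ[nhds x] (fun t => hf t - V t) := by
      filter_upwards [Ioo_mem_nhds hx.1 hx.2] with t ht using hFF' t ht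
    rw [heq.deriv_eq]
    exact ((hDh x).sub (hVd x)).deriv
  -- Step 2: rewrite the H² norm
  have hn : H2norm (fun x => fCH u x - fCH z x)
      = Real.sqrt ((∫ x in (0:ℝ)..1, (W x)^2) + (∫ x in (0:ℝ)..1, (hf x - V x)^2)
        + ∫ x in (0:ℝ)..1, (hd x - W x)^2) := by
    unfold H2norm
    congr 2
    · congr 1
      · exact integral_congr_Ioo (fun x hx => by show (fCH u x - fCH z x)^2 = (W x)^2; rw [hFF x hx]; ring)
      · exact integral_congr_Ioo (fun x hx => by rw [hFF' x hx])
    · exact integral_congr_Ioo (fun x hx => by rw [hFF'' x hx])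
  -- Step 3: energy identities
  have I1 : (∫ x in (0:ℝ)..1, ((W x)^2 + ((V x)^2 - V x * hf x))) = 0 := by
    rw [intervalIntegral.integral_eq_sub_of_hasDerivAt
      (f := fun t => V t * W t)
      (fun t _ => by
        have hm := (hVd t).fun_mul (hWd t)
        refine hm.congr_deriv ?_; ring)
      (Continuous.intervalIntegrable
        (((CW.fun_pow 2).fun_add ((CV.fun_pow 2).fun_sub (CV.fun_mul hh)))) _ _)]
    have k := Kf_periodic hh
    have l := Lf_periodic hh
    rw [hVdef, hWdef]; simp only
    rw [k, l]; ring
  have I2 : (∫ x in (0:ℝ)..1, ((V x * hf x - (hf x)^2) + W x * hd x)) = 0 := by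
    rw [intervalIntegral.integral_eq_sub_of_hasDerivAt
      (f := fun t => W t * hf t)
      (fun t _ => by
        have hm := (hWd t).fun_mul (hDh t)
        refine hm.congr_deriv ?_; ring)
      (Continuous.intervalIntegrable
        ((((CV.fun_mul hh).fun_sub (hh.fun_pow 2)).fun_add (CW.fun_mul hhd))) _ _)]
    rw [h0, h1]; ring
  have split1 : (∫ x in (0:ℝ)..1, ((W x)^2 + ((V x)^2 - V x * hf x)))
      = (∫ x in (0:ℝ)..1, (W x)^2)
        + ((∫ x in (0:ℝ)..1, (V x)^2) - ∫ x in (0:ℝ)..1, V x * hf x) := by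
    rw [intervalIntegral.integral_add (Continuous.intervalIntegrable (CW.fun_pow 2) _ _)
        (Continuous.intervalIntegrable ((CV.fun_pow 2).fun_sub (CV.fun_mul hh)) _ _),
      intervalIntegral.integral_sub (Continuous.intervalIntegrable (CV.fun_pow 2) _ _)
        (Continuous.intervalIntegrable (CV.fun_mul hh) _ _)]
  have split2 : (∫ x in (0:ℝ)..1, ((V x * hf x - (hf x)^2) + W x * hd x))
      = ((∫ x in (0:ℝ)..1, V x * hf x) - ∫ x in (0:ℝ)..1, (hf x)^2)
        + ∫ x in (0:ℝ)..1, W x * hd x := by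
    rw [intervalIntegral.integral_add
        (Continuous.intervalIntegrable ((CV.fun_mul hh).fun_sub (hh.fun_pow 2)) _ _)
        (Continuous.intervalIntegrable (CW.fun_mul hhd) _ _),
      intervalIntegral.integral_sub (Continuous.intervalIntegrable (CV.fun_mul hh) _ _)
        (Continuous.intervalIntegrable (hh.fun_pow 2) _ _)]
  have exp2 : (∫ x in (0:ℝ)..1, (hf x - V x)^2)
      = (∫ x in (0:ℝ)..1, (hf x)^2) - 2*(∫ x in (0:ℝ)..1, hf x * V x)
        + ∫ x in (0:ℝ)..1, (V x)^2 := expand_sq hh CV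
  have exp3 : (∫ x in (0:ℝ)..1, (hd x - W x)^2)
      = (∫ x in (0:ℝ)..1, (hd x)^2) - 2*(∫ x in (0:ℝ)..1, hd x * W x)
        + ∫ x in (0:ℝ)..1, (W x)^2 := expand_sq hhd CW
  have expC : (∫ x in (0:ℝ)..1, (V x - hf x)^2)
      = (∫ x in (0:ℝ)..1, (V x)^2) - 2*(∫ x in (0:ℝ)..1, V x * hf x)
        + ∫ x in (0:ℝ)..1, (hf x)^2 := expand_sq CV hh
  have comm1 : (∫ x in (0:ℝ)..1, hf x * V x) = ∫ x in (0:ℝ)..1, V x * hf x :=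
    intervalIntegral.integral_congr (fun t _ => mul_comm _ _)
  have comm2 : (∫ x in (0:ℝ)..1, hd x * W x) = ∫ x in (0:ℝ)..1, W x * hd x :=
    intervalIntegral.integral_congr (fun t _ => mul_comm _ _)
  have cpos : 0 ≤ ∫ x in (0:ℝ)..1, (V x - hf x)^2 := sq_int_nonneg _
  have key1 : (∫ x in (0:ℝ)..1, (W x)^2) + (∫ x in (0:ℝ)..1, (hf x - V x)^2)
      + (∫ x in (0:ℝ)..1, (hd x - W x)^2) ≤ ∫ x in (0:ℝ)..1, (hd x)^2 := by
    rw [split1] at I1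
    rw [split2] at I2
    rw [expC] at cpos
    rw [exp2, exp3, comm1, comm2]
    linarith
  -- Step 4: p, q machinery
  set p : ℝ → ℝ := fun x => u x - z x with hpdef
  set q : ℝ → ℝ := fun x => u x + z x with hqdef
  set dp : ℝ → ℝ := fun x => deriv u x - deriv z x with hdpdef
  set dq : ℝ → ℝ := fun x => deriv u x + deriv z x with hdqdef
  set ddp : ℝ → ℝ := fun x => deriv (deriv u) x - deriv (deriv z) x with hddpdef
  set ddq : ℝ → ℝ := fun x => deriv (deriv u) x + deriv (deriv z) x with hddqdef
  have Hp : ∀ t, HasDerivAt p (dp t) t := fun t => (Hu t).sub (Hz t)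
  have Hq : ∀ t, HasDerivAt q (dq t) t := fun t => (Hu t).add (Hz t)
  have Hdp : ∀ t, HasDerivAt dp (ddp t) t := fun t => (Hdu t).sub (Hdz t)
  have Hdq : ∀ t, HasDerivAt dq (ddq t) t := fun t => (Hdu t).add (Hdz t)
  have Cp : Continuous p := Cu.sub Cz
  have Cq : Continuous q := Cu.add Cz
  have CDp : Continuous dp := Cdu.sub Cdz
  have CDq : Continuous dq := Cdu.add Cdz
  have CDdp : Continuous ddp := Cddu.sub Cddz
  have CDdq : Continuous ddq := Cddu.add Cddz
  have hderivp : deriv p = dp := funext fun t => (Hp t).deriv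
  have hderivp2 : deriv dp = ddp := funext fun t => (Hdp t).deriv
  have hderivq : deriv q = dq := funext fun t => (Hq t).deriv
  have hderivq2 : deriv dq = ddq := funext fun t => (Hdq t).deriv
  have H2p_sq : (H2norm p)^2 = (∫ x in (0:ℝ)..1, (p x)^2)
      + (∫ x in (0:ℝ)..1, (dp x)^2) + ∫ x in (0:ℝ)..1, (ddp x)^2 := by
    unfold H2norm
    rw [hderivp, hderivp2, Real.sq_sqrt (by
      have := sq_int_nonneg p; have := sq_int_nonneg dp; have := sq_int_nonneg ddp; linarith)]
  have H2q_sq : (H2norm q)^2 = (∫ x in (0:ℝ)..1, (q x)^2)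
      + (∫ x in (0:ℝ)..1, (dq x)^2) + ∫ x in (0:ℝ)..1, (ddq x)^2 := by
    unfold H2norm
    rw [hderivq, hderivq2, Real.sq_sqrt (by
      have := sq_int_nonneg q; have := sq_int_nonneg dq; have := sq_int_nonneg ddq; linarith)]
  have supP : ∀ x ∈ Set.Icc (0:ℝ) 1, (dp x)^2
      ≤ ((∫ t in (0:ℝ)..1, (dp t)^2) + ∫ t in (0:ℝ)..1, (ddp t)^2)/2 :=
    fun x hx => sup_bound Hdp CDdp (by simp [hdpdef, hu0', hz0'])
      (by simp [hdpdef, hu1', hz1']) hx.1 hx.2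
  have supQ : ∀ x ∈ Set.Icc (0:ℝ) 1, (dq x)^2
      ≤ ((∫ t in (0:ℝ)..1, (dq t)^2) + ∫ t in (0:ℝ)..1, (ddq t)^2)/2 :=
    fun x hx => sup_bound Hdq CDdq (by simp [hdqdef, hu0', hz0'])
      (by simp [hdqdef, hu1', hz1']) hx.1 hx.2
  set r : ℝ → ℝ := fun x => q x + (1/2)*ddq x with hrdef
  set sfun : ℝ → ℝ := fun x => p x + (1/2)*ddp x with hsdef
  have Cr : Continuous r := Cq.add (continuous_const.mul CDdq)
  have Cs : Continuous sfun := Cp.add (continuous_const.mul CDdp)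
  have pointb : ∀ x ∈ Set.Icc (0:ℝ) 1, (hd x)^2
      ≤ ((∫ t in (0:ℝ)..1, (dp t)^2) + ∫ t in (0:ℝ)..1, (ddp t)^2) * (r x)^2
        + ((∫ t in (0:ℝ)..1, (dq t)^2) + ∫ t in (0:ℝ)..1, (ddq t)^2) * (sfun x)^2 := by
    intro x hx
    have e : hd x = dp x * r x + dq x * sfun x := by
      simp only [hhddef, hdpdef, hdqdef, hrdef, hsdef, hpdef, hqdef, hddpdef, hddqdef]
      ring
    have b1 := supP x hx
    have b2 := supQ x hx
    rw [e]
    exact amgm4 b1 b2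
  have EM1b : (∫ x in (0:ℝ)..1, (hd x)^2)
      ≤ ((∫ t in (0:ℝ)..1, (dp t)^2) + ∫ t in (0:ℝ)..1, (ddp t)^2)
          * (∫ x in (0:ℝ)..1, (r x)^2)
        + ((∫ t in (0:ℝ)..1, (dq t)^2) + ∫ t in (0:ℝ)..1, (ddq t)^2)
          * ∫ x in (0:ℝ)..1, (sfun x)^2 := by
    have mono := intervalIntegral.integral_mono_on (μ := volume) (by norm_num : (0:ℝ) ≤ 1)
      (Continuous.intervalIntegrable (hhd.fun_pow 2) _ _)
      (Continuous.intervalIntegrable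
        ((continuous_const.fun_mul (Cr.fun_pow 2)).fun_add (continuous_const.fun_mul (Cs.fun_pow 2))) _ _)
      pointb
    rwa [intervalIntegral.integral_add
        (Continuous.intervalIntegrable (continuous_const.fun_mul (Cr.fun_pow 2)) _ _)
        (Continuous.intervalIntegrable (continuous_const.fun_mul (Cs.fun_pow 2)) _ _),
      intervalIntegral.integral_const_mul, intervalIntegral.integral_const_mul] at mono
  have bypartsq : (∫ x in (0:ℝ)..1, ((dq x)^2 + q x * ddq x)) = 0 := by
    rw [intervalIntegral.integral_eq_sub_of_hasDerivAt (f := fun t => q t * dq t)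
      (fun t _ => by
        have hm := (Hq t).fun_mul (Hdq t)
        refine hm.congr_deriv ?_; ring)
      (Continuous.intervalIntegrable ((CDq.fun_pow 2).fun_add (Cq.fun_mul CDdq)) _ _)]
    have q0 : q 0 = 0 := by simp [hqdef, hu0, hz0]
    have q1 : q 1 = 0 := by simp [hqdef, hu1, hz1]
    rw [q0, q1]; ring
  have bypartsp : (∫ x in (0:ℝ)..1, ((dp x)^2 + p x * ddp x)) = 0 := by
    rw [intervalIntegral.integral_eq_sub_of_hasDerivAt (f := fun t => p t * dp t)
      (fun t _ => by
        have hm := (Hp t).fun_mul (Hdp t)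
        refine hm.congr_deriv ?_; ring)
      (Continuous.intervalIntegrable ((CDp.fun_pow 2).fun_add (Cp.fun_mul CDdp)) _ _)]
    have p0 : p 0 = 0 := by simp [hpdef, hu0, hz0]
    have p1 : p 1 = 0 := by simp [hpdef, hu1, hz1]
    rw [p0, p1]; ring
  have bqsplit : (∫ x in (0:ℝ)..1, (dq x)^2) + (∫ x in (0:ℝ)..1, q x * ddq x) = 0 := by
    rw [← intervalIntegral.integral_add (Continuous.intervalIntegrable (CDq.fun_pow 2) _ _)
      (Continuous.intervalIntegrable (Cq.fun_mul CDdq) _ _)]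
    exact bypartsq
  have bpsplit : (∫ x in (0:ℝ)..1, (dp x)^2) + (∫ x in (0:ℝ)..1, p x * ddp x) = 0 := by
    rw [← intervalIntegral.integral_add (Continuous.intervalIntegrable (CDp.fun_pow 2) _ _)
      (Continuous.intervalIntegrable (Cp.fun_mul CDdp) _ _)]
    exact bypartsp
  have rsq : (∫ x in (0:ℝ)..1, (r x)^2) = (∫ x in (0:ℝ)..1, (q x)^2)
      + (∫ x in (0:ℝ)..1, q x * ddq x) + (1/4) * ∫ x in (0:ℝ)..1, (ddq x)^2 := by
    have e : (∫ x in (0:ℝ)..1, (r x)^2)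
        = ∫ x in (0:ℝ)..1, ((q x)^2 + (q x * ddq x + (1/4)*(ddq x)^2)) := by
      apply intervalIntegral.integral_congr
      intro t _
      simp only [hrdef]; ring
    rw [e, intervalIntegral.integral_add (Continuous.intervalIntegrable (Cq.fun_pow 2) _ _)
        (Continuous.intervalIntegrable
          ((Cq.fun_mul CDdq).fun_add (continuous_const.fun_mul (CDdq.fun_pow 2))) _ _),
      intervalIntegral.integral_add (Continuous.intervalIntegrable (Cq.fun_mul CDdq) _ _)
        (Continuous.intervalIntegrable (continuous_const.fun_mul (CDdq.fun_pow 2)) _ _),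
      intervalIntegral.integral_const_mul]
    ring
  have ssq : (∫ x in (0:ℝ)..1, (sfun x)^2) = (∫ x in (0:ℝ)..1, (p x)^2)
      + (∫ x in (0:ℝ)..1, p x * ddp x) + (1/4) * ∫ x in (0:ℝ)..1, (ddp x)^2 := by
    have e : (∫ x in (0:ℝ)..1, (sfun x)^2)
        = ∫ x in (0:ℝ)..1, ((p x)^2 + (p x * ddp x + (1/4)*(ddp x)^2)) := by
      apply intervalIntegral.integral_congr
      intro t _
      simp only [hsdef]; ring
    rw [e, intervalIntegral.integral_add (Continuous.intervalIntegrable (Cp.fun_pow 2) _ _)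
        (Continuous.intervalIntegrable
          ((Cp.fun_mul CDdp).fun_add (continuous_const.fun_mul (CDdp.fun_pow 2))) _ _),
      intervalIntegral.integral_add (Continuous.intervalIntegrable (Cp.fun_mul CDdp) _ _)
        (Continuous.intervalIntegrable (continuous_const.fun_mul (CDdp.fun_pow 2)) _ _),
      intervalIntegral.integral_const_mul]
    ring
  have f1 : (∫ x in (0:ℝ)..1, (dp x)^2) + (∫ x in (0:ℝ)..1, (ddp x)^2) ≤ (H2norm p)^2 := by
    rw [H2p_sq]; have := sq_int_nonneg p; linarith
  have f1' : (0:ℝ) ≤ (∫ x in (0:ℝ)..1, (dp x)^2) + (∫ x in (0:ℝ)..1, (ddp x)^2) := by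
    have := sq_int_nonneg dp; have := sq_int_nonneg ddp; linarith
  have f2 : (∫ x in (0:ℝ)..1, (r x)^2) ≤ (H2norm q)^2 := by
    rw [H2q_sq, rsq]
    have := sq_int_nonneg dq; have := sq_int_nonneg ddq
    linarith [bqsplit]
  have f3 : (∫ x in (0:ℝ)..1, (dq x)^2) + (∫ x in (0:ℝ)..1, (ddq x)^2) ≤ (H2norm q)^2 := by
    rw [H2q_sq]; have := sq_int_nonneg q; linarith
  have f3' : (0:ℝ) ≤ (∫ x in (0:ℝ)..1, (dq x)^2) + (∫ x in (0:ℝ)..1, (ddq x)^2) := by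
    have := sq_int_nonneg dq; have := sq_int_nonneg ddq; linarith
  have f4 : (∫ x in (0:ℝ)..1, (sfun x)^2) ≤ (H2norm p)^2 := by
    rw [H2p_sq, ssq]
    have := sq_int_nonneg dp; have := sq_int_nonneg ddp
    linarith [bpsplit]
  have EM1b2 : (∫ x in (0:ℝ)..1, (hd x)^2) ≤ 2*((H2norm p)^2*(H2norm q)^2) := by
    have m1 : ((∫ t in (0:ℝ)..1, (dp t)^2) + ∫ t in (0:ℝ)..1, (ddp t)^2)
        * (∫ x in (0:ℝ)..1, (r x)^2) ≤ (H2norm p)^2 * (H2norm q)^2 :=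
      mul_le_mul f1 f2 (sq_int_nonneg r) (sq_nonneg _)
    have m2 : ((∫ t in (0:ℝ)..1, (dq t)^2) + ∫ t in (0:ℝ)..1, (ddq t)^2)
        * (∫ x in (0:ℝ)..1, (sfun x)^2) ≤ (H2norm q)^2 * (H2norm p)^2 :=
      mul_le_mul f3 f4 (sq_int_nonneg sfun) (sq_nonneg _)
    linarith [EM1b]
  -- Step 5: Minkowski for H2norm
  have hu2sq : (H2norm u)^2 = (∫ x in (0:ℝ)..1, (u x)^2)
      + (∫ x in (0:ℝ)..1, (deriv u x)^2) + ∫ x in (0:ℝ)..1, (deriv (deriv u) x)^2 := by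
    unfold H2norm
    rw [Real.sq_sqrt (by
      have := sq_int_nonneg u; have := sq_int_nonneg (deriv u)
      have := sq_int_nonneg (deriv (deriv u)); linarith)]
  have hz2sq : (H2norm z)^2 = (∫ x in (0:ℝ)..1, (z x)^2)
      + (∫ x in (0:ℝ)..1, (deriv z x)^2) + ∫ x in (0:ℝ)..1, (deriv (deriv z) x)^2 := by
    unfold H2norm
    rw [Real.sq_sqrt (by
      have := sq_int_nonneg z; have := sq_int_nonneg (deriv z)
      have := sq_int_nonneg (deriv (deriv z)); linarith)]
  have Sbound : (∫ x in (0:ℝ)..1, u x * z x) + (∫ x in (0:ℝ)..1, deriv u x * deriv z x)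
      + (∫ x in (0:ℝ)..1, deriv (deriv u) x * deriv (deriv z) x)
      ≤ H2norm u * H2norm z := by
    apply prod_bound' (H2norm_nonneg u) (H2norm_nonneg z)
    intro t ht
    have c1 := cross_bound Cu Cz t
    have c2 := cross_bound Cdu Cdz t
    have c3 := cross_bound Cddu Cddz t
    rw [hu2sq, hz2sq]
    linarith [c1, c2, c3]
  have H2q_le : H2norm q ≤ H2norm u + H2norm z := by
    have ea : (∫ x in (0:ℝ)..1, (q x)^2) = (∫ x in (0:ℝ)..1, (u x)^2)
        + 2*(∫ x in (0:ℝ)..1, u x * z x) + ∫ x in (0:ℝ)..1, (z x)^2 := by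
      rw [hqdef]; exact expand_sq' Cu Cz
    have eb : (∫ x in (0:ℝ)..1, (dq x)^2) = (∫ x in (0:ℝ)..1, (deriv u x)^2)
        + 2*(∫ x in (0:ℝ)..1, deriv u x * deriv z x) + ∫ x in (0:ℝ)..1, (deriv z x)^2 := by
      rw [hdqdef]; exact expand_sq' Cdu Cdz
    have ec : (∫ x in (0:ℝ)..1, (ddq x)^2) = (∫ x in (0:ℝ)..1, (deriv (deriv u) x)^2)
        + 2*(∫ x in (0:ℝ)..1, deriv (deriv u) x * deriv (deriv z) x)
        + ∫ x in (0:ℝ)..1, (deriv (deriv z) x)^2 := by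
      rw [hddqdef]; exact expand_sq' Cddu Cddz
    have e : (H2norm q)^2 ≤ (H2norm u + H2norm z)^2 := by
      rw [H2q_sq, ea, eb, ec]
      linarith [Sbound, hu2sq, hz2sq]
    calc H2norm q = Real.sqrt ((H2norm q)^2) := (Real.sqrt_sq (H2norm_nonneg q)).symm
      _ ≤ Real.sqrt ((H2norm u + H2norm z)^2) := Real.sqrt_le_sqrt e
      _ = H2norm u + H2norm z :=
        Real.sqrt_sq (add_nonneg (H2norm_nonneg u) (H2norm_nonneg z))
  -- Step 6: final assembly
  rw [hn]
  have final1 : (∫ x in (0:ℝ)..1, (W x)^2) + (∫ x in (0:ℝ)..1, (hf x - V x)^2)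
      + (∫ x in (0:ℝ)..1, (hd x - W x)^2)
      ≤ ((3/2)*(H2norm u + H2norm z)*(H2norm p))^2 := by
    have hq2 : (H2norm q)^2 ≤ (H2norm u + H2norm z)^2 := by
      exact pow_le_pow_left₀ (H2norm_nonneg q) H2q_le 2
    have step : (∫ x in (0:ℝ)..1, (hd x)^2)
        ≤ 2*((H2norm p)^2*(H2norm u + H2norm z)^2) := by
      have hm := mul_le_mul_of_nonneg_left hq2 (sq_nonneg (H2norm p))
      linarith [EM1b2]
    have e9 : ((3/2)*(H2norm u + H2norm z)*(H2norm p))^2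
        = (9/4)*((H2norm p)^2*(H2norm u + H2norm z)^2) := by ring
    have pos9 : 0 ≤ (H2norm p)^2*(H2norm u + H2norm z)^2 :=
      mul_nonneg (sq_nonneg _) (sq_nonneg _)
    rw [e9]
    linarith [key1, step]
  calc Real.sqrt ((∫ x in (0:ℝ)..1, (W x)^2) + (∫ x in (0:ℝ)..1, (hf x - V x)^2)
        + ∫ x in (0:ℝ)..1, (hd x - W x)^2)
      ≤ Real.sqrt (((3/2)*(H2norm u + H2norm z)*(H2norm p))^2) := Real.sqrt_le_sqrt final1
    _ = (3/2)*(H2norm u + H2norm z)*(H2norm p) := Real.sqrt_sq (by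
        have := H2norm_nonneg p
        have := add_nonneg (H2norm_nonneg u) (H2norm_nonneg z)
        positivity)
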